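/- Let L be a finite-dimensional Lie algebra over any field F. Then N*(L) ⊆ Ñ(L). -/

import Mathlib

namespace Paper

open LieAlgebra

section AlgDefs

variable (F : Type*) [Field F] (L : Type*) [LieRing L] [LieAlgebra F L]

/-- The nilradical of a Lie algebra: the largest nilpotent ideal (the sup of nilpotent ideals). -/
noncomputable def nilrad : LieIdeal F L :=
  sSup {I : LieIdeal F L | LieRing.IsNilpotent I}

/-- The nilpotency class of a Lie algebra. -/
noncomputable def nilClass (F : Type*) [Field F] (L : Type*) [LieRing L] [LieAlgebra F L] : ℕ :=
  LieModule.nilpotencyLength L L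

/-- A Lie algebra is nilregular if the field has characteristic zero, or characteristic `p > 0`
and its nilradical has nilpotency class less than `p - 1`. -/
noncomputable def Nilregular : Prop :=
  ringChar F = 0 ∨ nilClass F (nilrad F L) < ringChar F - 1

/-- A Lie algebra is solregular if the field has characteristic zero, or characteristic `p > 0`
and its radical has derived length less than `log₂ p`. -/
noncomputable def Solregular : Prop :=
  ringChar F = 0 ∨ 2 ^ LieAlgebra.derivedLength F (LieAlgebra.radical F L) < ringChar F

/-- Regular means nilregular or solregular. -/
noncomputable def Regular : Prop := Nilregular F L ∨ Solregular F L

end AlgDefs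

section IdealDefs

variable {F : Type*} [Field F] {L : Type*} [LieRing L] [LieAlgebra F L]

/-- The centraliser `C_L(I)` of an ideal `I`, as an ideal of `L`. -/
def centralizer (I : LieIdeal F L) : LieIdeal F L where
  carrier := {x : L | ∀ y ∈ I, ⁅x, y⁆ = 0}
  zero_mem' := by intro y hy; simp
  add_mem' := by intro a b ha hb y hy; rw [add_lie, ha y hy, hb y hy, add_zero]
  smul_mem' := by intro c x hx y hy; rw [smul_lie, hx y hy, smul_zero]
  lie_mem := by
    intro x m hm y hy
    have h1 : ⁅x, ⁅m, y⁆⁆ = (0 : L) := by rw [hm y hy, lie_zero]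
    have h2 : ⁅m, ⁅x, y⁆⁆ = (0 : L) := hm _ (I.lie_mem hy)
    show ⁅⁅x, m⁆, y⁆ = (0 : L)
    rw [lie_lie, h1, h2, sub_zero]

/-- The centre `Z(I)` of an ideal `I`, as an ideal of `L`. -/
def idealCenter (I : LieIdeal F L) : LieIdeal F L where
  carrier := {x : L | x ∈ I ∧ ∀ y ∈ I, ⁅x, y⁆ = 0}
  zero_mem' := ⟨I.zero_mem, by intro y hy; simp⟩
  add_mem' := by
    intro a b ha hb
    exact ⟨I.add_mem ha.1 hb.1, fun y hy => by rw [add_lie, ha.2 y hy, hb.2 y hy, add_zero]⟩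
  smul_mem' := by
    intro c x hx
    exact ⟨I.smul_mem c hx.1, fun y hy => by rw [smul_lie, hx.2 y hy, smul_zero]⟩
  lie_mem := by
    intro x m hm
    refine ⟨I.lie_mem hm.1, fun y hy => ?_⟩
    have h1 : ⁅x, ⁅m, y⁆⁆ = (0 : L) := by rw [hm.2 y hy, lie_zero]
    have h2 : ⁅m, ⁅x, y⁆⁆ = (0 : L) := hm.2 _ (I.lie_mem hy)
    show ⁅⁅x, m⁆, y⁆ = (0 : L)
    rw [lie_lie, h1, h2, sub_zero]

/-- The centraliser `C_L(A/B)` of a chief factor, as an ideal of `L`. -/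
def chiefCentralizer (A B : LieIdeal F L) : LieIdeal F L where
  carrier := {x : L | ∀ a ∈ A, ⁅x, a⁆ ∈ B}
  zero_mem' := by intro a ha; simp [B.zero_mem]
  add_mem' := by intro x y hx hy a ha; rw [add_lie]; exact B.add_mem (hx a ha) (hy a ha)
  smul_mem' := by intro c x hx a ha; rw [smul_lie]; exact B.smul_mem c (hx a ha)
  lie_mem := by
    intro x m hm a ha
    show ⁅⁅x, m⁆, a⁆ ∈ B
    rw [lie_lie]
    exact B.sub_mem (B.lie_mem (hm a ha)) (hm _ (A.lie_mem ha))

/-- `A/Z` is a minimal ideal of `L/Z` (via the ideal correspondence). -/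
def IsMinModIdeal (Z A : LieIdeal F L) : Prop :=
  Z < A ∧ ∀ B : LieIdeal F L, Z ≤ B → B ≤ A → B = Z ∨ B = A

/-- `A` is a minimal ideal of `L`. -/
def IsMinimalIdeal (A : LieIdeal F L) : Prop := IsMinModIdeal ⊥ A

/-- An ideal `A` of `L` is quasi-minimal if `A² = A` and `A/Z(A)` is a minimal ideal
of `L/Z(A)`. -/
def IsQuasiMinimal (A : LieIdeal F L) : Prop :=
  ⁅A, A⁆ = A ∧ IsMinModIdeal (idealCenter A) A

end IdealDefs

section MoreDefs

variable (F : Type*) [Field F] (L : Type*) [LieRing L] [LieAlgebra F L]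

/-- `E†(L)`: the subalgebra generated by the quasi-minimal components of `L`. -/
noncomputable def Edagger : LieSubalgebra F L :=
  LieSubalgebra.lieSpan F L (⋃ A ∈ {A : LieIdeal F L | IsQuasiMinimal A}, (A : Set L))

/-- `N†(L) = N(L) + E†(L)`: the quasi-minimal radical of `L`. -/
noncomputable def Ndagger : LieSubalgebra F L :=
  LieIdeal.toLieSubalgebra F L (nilrad F L) ⊔ Edagger F L

/-- The generalised nilradical `N*(L)`: the ideal containing `N = N(L)` with
`N*(L)/N` the sum of all minimal ideals of `L/N` contained in `(N + C_L(N))/N`. -/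
noncomputable def Nstar : LieIdeal F L :=
  nilrad F L ⊔ sSup {A : LieIdeal F L | IsMinModIdeal (nilrad F L) A ∧
    A ≤ nilrad F L ⊔ centralizer (nilrad F L)}

/-- The Frattini ideal: the largest ideal contained in every maximal subalgebra. -/
def frattini : LieIdeal F L :=
  sSup {I : LieIdeal F L | ∀ M : LieSubalgebra F L, IsCoatom M → (I : Set L) ⊆ M}

/-- `Ñ(L)`: the ideal with `Ñ(L)/φ(L) = Soc (L/φ(L))`. -/
noncomputable def Ntilde : LieIdeal F L :=
  frattini F L ⊔ sSup {A : LieIdeal F L | IsMinModIdeal (frattini F L) A}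

/-- A characteristic ideal: one invariant under all derivations. -/
def IsCharIdeal (J : LieIdeal F L) : Prop :=
  ∀ D : LieDerivation F L L, ∀ x ∈ J, D x ∈ J

/-- The characteristic radical `R_c(L)`: the sum of all solvable characteristic ideals. -/
noncomputable def charRadical : LieIdeal F L :=
  sSup {J : LieIdeal F L | LieAlgebra.IsSolvable J ∧ IsCharIdeal F L J}

/-- A subideal: a subalgebra joined to `L` by a chain of successive ideals. -/
def IsSubideal (S : LieSubalgebra F L) : Prop :=
  ∃ n : ℕ, ∃ c : Fin (n + 1) → LieSubalgebra F L,
    c 0 = S ∧ c (Fin.last n) = ⊤ ∧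
    ∀ i : Fin n, c i.castSucc ≤ c i.succ ∧
      ∀ x ∈ c i.succ, ∀ y ∈ c i.castSucc, ⁅x, y⁆ ∈ c i.castSucc

end MoreDefs

section Aux18

variable {F : Type*} [Field F] {L : Type*} [LieRing L] [LieAlgebra F L]

lemma frattini_le_coatom {M : LieSubalgebra F L} (hM : IsCoatom M) :
    ∀ x ∈ frattini F L, x ∈ M := by
  intro x hx
  have h : LieSubmodule.toSubmodule (sSup {I : LieIdeal F L |
      ∀ M : LieSubalgebra F L, IsCoatom M → (I : Set L) ⊆ M}) ≤ M.toSubmodule := by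
    rw [LieSubmodule.sSup_toSubmodule]
    apply sSup_le
    rintro p ⟨I, hI, rfl⟩
    intro y hy
    exact hI M hM hy
  exact h hx

lemma le_frattini {I : LieIdeal F L}
    (h : ∀ M : LieSubalgebra F L, IsCoatom M → ∀ x ∈ I, x ∈ M) : I ≤ frattini F L :=
  le_sSup (fun M hM x hx => h M hM x hx)

lemma exists_coatom_not_le {I : LieIdeal F L} (h : ¬ I ≤ frattini F L) :
    ∃ M : LieSubalgebra F L, IsCoatom M ∧ ∃ x ∈ I, x ∉ M := by
  by_contra hc
  push_neg at hc
  exact h (le_frattini (fun M hM x hx => hc M hM x hx))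

lemma mem_sup_of_coatom {D : LieIdeal F L} {M : LieSubalgebra F L} (hM : IsCoatom M)
    (h : ∃ x ∈ D, x ∉ M) (z : L) :
    z ∈ LieSubmodule.toSubmodule D ⊔ M.toSubmodule := by
  set S : LieSubalgebra F L :=
    { toSubmodule := LieSubmodule.toSubmodule D ⊔ M.toSubmodule
      lie_mem' := by
        intro x y hx hy
        obtain ⟨d', hd', m', hm', rfl⟩ := Submodule.mem_sup.mp hy
        obtain ⟨d, hd, m, hm, rfl⟩ := Submodule.mem_sup.mp hx
        have h1 : ⁅d + m, d'⁆ ∈ D := D.lie_mem hd'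
        have h2 : ⁅d, m'⁆ ∈ D := by
          rw [← lie_skew]
          exact D.neg_mem (D.lie_mem hd)
        have h3 : ⁅m, m'⁆ ∈ M := M.lie_mem hm hm'
        have e : ⁅d + m, d' + m'⁆ = (⁅d + m, d'⁆ + ⁅d, m'⁆) + ⁅m, m'⁆ := by
          rw [lie_add, add_lie, add_lie]; abel
        show ⁅d + m, d' + m'⁆ ∈ LieSubmodule.toSubmodule D ⊔ M.toSubmodule
        rw [e]
        exact Submodule.add_mem _
          (Submodule.add_mem _ (Submodule.mem_sup_left h1) (Submodule.mem_sup_left h2))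
          (Submodule.mem_sup_right h3) }
  have hMS : M ≤ S := by
    intro m hm
    exact Submodule.mem_sup_right hm
  have hne : M ≠ S := by
    obtain ⟨x, hxD, hxM⟩ := h
    intro he
    apply hxM
    rw [he]
    exact Submodule.mem_sup_left hxD
  have hS : S = ⊤ := hM.2 S (lt_of_le_of_ne hMS hne)
  have : z ∈ S := by rw [hS]; trivial
  exact this

/-- Lower central series of an ideal, as ideals of the ambient algebra. -/
def mlcs (K : LieIdeal F L) : ℕ → LieIdeal F L
  | 0 => K
  | n+1 => ⁅K, mlcs K n⁆

@[simp] lemma mlcs_zero (K : LieIdeal F L) : mlcs K 0 = K := rfl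

@[simp] lemma mlcs_succ (K : LieIdeal F L) (n : ℕ) : mlcs K (n+1) = ⁅K, mlcs K n⁆ := rfl

lemma mlcs_le_self (K : LieIdeal F L) (n : ℕ) : mlcs K n ≤ K := by
  induction n with
  | zero => exact le_rfl
  | succ n ih => exact LieSubmodule.lie_le_left K (mlcs K n)

lemma mlcs_le_lcs (K : LieIdeal F L) (n : ℕ) : mlcs K n ≤ K.lcs L n := by
  induction n with
  | zero => simp
  | succ n ih =>
    rw [mlcs_succ, LieIdeal.lcs_succ]
    exact LieSubmodule.mono_lie_right K ih

lemma lcs_succ_le_mlcs (K : LieIdeal F L) (n : ℕ) : K.lcs L (n+1) ≤ mlcs K n := by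
  induction n with
  | zero =>
    rw [LieIdeal.lcs_succ, LieIdeal.lcs_zero, mlcs_zero]
    exact LieSubmodule.lie_le_left K ⊤
  | succ n ih =>
    rw [LieIdeal.lcs_succ, mlcs_succ]
    exact LieSubmodule.mono_lie_right K ih

lemma lcs_antitone (K : LieIdeal F L) : Antitone (fun n => K.lcs L n) := by
  apply antitone_nat_of_succ_le
  intro n
  rw [LieIdeal.lcs_succ]
  exact LieSubmodule.lie_le_right _ _

/-- An ideal which is nilpotent as a Lie algebra has vanishing `mlcs`. -/
lemma mlcs_eq_bot_of_isNilpotent {K : LieIdeal F L} (h : LieRing.IsNilpotent K) :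
    ∃ n, mlcs K n = ⊥ := by
  obtain ⟨k, hk⟩ := (LieModule.isNilpotent_iff F K K).mp h
  refine ⟨k, ?_⟩
  have main : ∀ n, LieSubmodule.toSubmodule (mlcs K n) ≤
      Submodule.map (LieSubmodule.toSubmodule K).subtype
        (LieSubmodule.toSubmodule (LieModule.lowerCentralSeries F (↥K) (↥K) n)) := by
    intro n
    induction n with
    | zero =>
      intro x hx
      exact ⟨⟨x, hx⟩, by simp, rfl⟩
    | succ n ih =>
      rw [mlcs_succ, LieSubmodule.lieIdeal_oper_eq_linear_span']
      rw [Submodule.span_le]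
      rintro z ⟨x, hx, y, hy, rfl⟩
      obtain ⟨y', hy', rfl⟩ := ih hy
      refine ⟨⁅(⟨x, hx⟩ : K), y'⁆, ?_, rfl⟩
      rw [LieModule.lowerCentralSeries_succ]
      exact LieSubmodule.lie_mem_lie (LieSubmodule.mem_top _) hy'
  rw [eq_bot_iff]
  intro x hx
  have := main k hx
  rw [hk] at this
  obtain ⟨y, hy, rfl⟩ := this
  have hy0 : y = 0 := by simpa using hy
  rw [hy0]
  simp

lemma lie_finset_sup_le {s : Finset ℕ} {f : ℕ → LieIdeal F L} (I : LieIdeal F L) :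
    ⁅I, s.sup f⁆ ≤ s.sup (fun a => ⁅I, f a⁆) := by
  classical
  induction s using Finset.induction_on with
  | empty => simp [LieSubmodule.lie_bot]
  | insert a s hns ih =>
    rw [Finset.sup_insert, Finset.sup_insert, LieSubmodule.lie_sup]
    exact sup_le_sup le_rfl ih

/-- The `lcs` of a sup of ideals is controlled by the `lcs` of the two ideals. -/
lemma lcs_sup_le (I J : LieIdeal F L) (n : ℕ) :
    (I ⊔ J).lcs L n ≤ (Finset.range (n+1)).sup (fun p => I.lcs L p ⊓ J.lcs L (n - p)) := by
  induction n with
  | zero =>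
    have h0 : (0:ℕ) ∈ Finset.range 1 := by simp
    refine le_trans ?_ (Finset.le_sup (f := fun p => I.lcs L p ⊓ J.lcs L (0 - p)) h0)
    simp
  | succ n ih =>
    rw [LieIdeal.lcs_succ]
    calc ⁅I ⊔ J, (I ⊔ J).lcs L n⁆
        ≤ ⁅I ⊔ J, (Finset.range (n+1)).sup (fun p => I.lcs L p ⊓ J.lcs L (n - p))⁆ :=
          LieSubmodule.mono_lie_right _ ih
      _ = ⁅I, (Finset.range (n+1)).sup (fun p => I.lcs L p ⊓ J.lcs L (n - p))⁆ ⊔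
          ⁅J, (Finset.range (n+1)).sup (fun p => I.lcs L p ⊓ J.lcs L (n - p))⁆ :=
          LieSubmodule.sup_lie _ _ _
      _ ≤ _ := by
          apply sup_le
          · refine le_trans (lie_finset_sup_le I) ?_
            apply Finset.sup_le
            intro p hp
            rw [Finset.mem_range] at hp
            have h1 : ⁅I, I.lcs L p ⊓ J.lcs L (n - p)⁆ ≤ I.lcs L (p+1) ⊓ J.lcs L (n - p) := by
              apply le_inf
              · rw [LieIdeal.lcs_succ]
                exact LieSubmodule.mono_lie_right I inf_le_left
              · exact le_trans (LieSubmodule.mono_lie_right I inf_le_right)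
                  (LieSubmodule.lie_le_right _ _)
            refine le_trans h1 ?_
            have hmem : p + 1 ∈ Finset.range (n+2) := by
              rw [Finset.mem_range]; omega
            have harith : n - p = (n + 1) - (p + 1) := by omega
            rw [harith]
            exact Finset.le_sup (f := fun p => I.lcs L p ⊓ J.lcs L (n + 1 - p)) hmem
          · refine le_trans (lie_finset_sup_le J) ?_
            apply Finset.sup_le
            intro p hp
            rw [Finset.mem_range] at hp
            have h1 : ⁅J, I.lcs L p ⊓ J.lcs L (n - p)⁆ ≤ I.lcs L p ⊓ J.lcs L (n - p + 1) := by
              apply le_inf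
              · exact le_trans (LieSubmodule.mono_lie_right J inf_le_left)
                  (LieSubmodule.lie_le_right _ _)
              · rw [LieIdeal.lcs_succ]
                exact LieSubmodule.mono_lie_right J inf_le_right
            refine le_trans h1 ?_
            have hmem : p ∈ Finset.range (n+2) := by
              rw [Finset.mem_range]; omega
            have harith : n - p + 1 = (n + 1) - p := by omega
            rw [harith]
            exact Finset.le_sup (f := fun p => I.lcs L p ⊓ J.lcs L (n + 1 - p)) hmem

/-- Relative version of "the derived algebra of a nilpotent ideal lies in the Frattini ideal". -/
lemma derived_le_frattini (K : LieIdeal F L) (n : ℕ) (h : mlcs K n ≤ frattini F L) :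
    ⁅K, K⁆ ≤ frattini F L := by
  match n with
  | 0 => exact le_trans (LieSubmodule.lie_le_left K K) h
  | (m+1) =>
  by_contra hc
  obtain ⟨M, hM, hw⟩ := exists_coatom_not_le hc
  have hdec : ∀ z : L, z ∈ LieSubmodule.toSubmodule ⁅K,K⁆ ⊔ M.toSubmodule :=
    mem_sup_of_coatom hM hw
  set U : Submodule F L := LieSubmodule.toSubmodule K ⊓ M.toSubmodule with hU
  set Φ : Submodule F L := LieSubmodule.toSubmodule (frattini F L) with hΦ
  have hbase : LieSubmodule.toSubmodule K ≤
      U ⊔ LieSubmodule.toSubmodule (mlcs K 1) := by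
    intro z hz
    obtain ⟨d, hd, m2, hm2, he⟩ := Submodule.mem_sup.mp (hdec z)
    have hdK : d ∈ K := LieSubmodule.lie_le_left K K hd
    have hm2K : m2 ∈ K := by
      have : m2 = z - d := by rw [← he]; abel
      rw [this]
      exact K.sub_mem hz hdK
    have hm2U : m2 ∈ U := Submodule.mem_inf.mpr ⟨hm2K, hm2⟩
    have hd1 : d ∈ LieSubmodule.toSubmodule (mlcs K 1) := hd
    rw [← he]
    exact Submodule.add_mem _ (Submodule.mem_sup_right hd1) (Submodule.mem_sup_left hm2U)
  have key : ∀ j : ℕ, LieSubmodule.toSubmodule K ≤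
      (U ⊔ LieSubmodule.toSubmodule (mlcs K (j+1))) ⊔ Φ := by
    intro j
    induction j with
    | zero => exact le_trans hbase le_sup_left
    | succ j ih =>
      have hstep : LieSubmodule.toSubmodule (mlcs K 1) ≤
          (U ⊔ LieSubmodule.toSubmodule (mlcs K (j+2))) ⊔ Φ := by
        have : (mlcs K 1) = ⁅K, (K : LieIdeal F L)⁆ := rfl
        rw [this, LieSubmodule.lieIdeal_oper_eq_linear_span', Submodule.span_le]
        rintro z ⟨x, hx, y, hy, rfl⟩
        obtain ⟨w, hw', p, hp, hex⟩ := Submodule.mem_sup.mp (ih hx)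
        obtain ⟨u, hu, a, ha, hew⟩ := Submodule.mem_sup.mp hw'
        obtain ⟨w', hw'', p', hp', hey⟩ := Submodule.mem_sup.mp (ih hy)
        obtain ⟨u', hu', a', ha', hew'⟩ := Submodule.mem_sup.mp hw''
        have huK : u ∈ K := (Submodule.mem_inf.mp hu).1
        have huM : u ∈ M := (Submodule.mem_inf.mp hu).2
        have hu'K : u' ∈ K := (Submodule.mem_inf.mp hu').1
        have hu'M : u' ∈ M := (Submodule.mem_inf.mp hu').2
        have hyK : y ∈ K := hy
        -- ⁅x, y⁆ = ⁅u, u'⁆ + (⁅u, a'⁆ + ⁅u, p'⁆ + ⁅a, y⁆ + ⁅p, y⁆)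
        have hxe : x = u + a + p := by rw [← hex, ← hew]
        have hye : y = u' + a' + p' := by rw [← hey, ← hew']
        have m1 : ⁅u, u'⁆ ∈ U := Submodule.mem_inf.mpr ⟨K.lie_mem hu'K, M.lie_mem huM hu'M⟩
        have m2 : ⁅u, a'⁆ ∈ LieSubmodule.toSubmodule (mlcs K (j+2)) := by
          show ⁅u, a'⁆ ∈ mlcs K (j+2)
          rw [mlcs_succ]
          exact LieSubmodule.lie_mem_lie huK ha'
        have m3 : ⁅u, p'⁆ ∈ Φ := (frattini F L).lie_mem hp'
        have m4 : ⁅a, y⁆ ∈ LieSubmodule.toSubmodule (mlcs K (j+2)) := by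
          show ⁅a, y⁆ ∈ mlcs K (j+2)
          rw [← lie_skew]
          refine (mlcs K (j+2)).neg_mem ?_
          rw [mlcs_succ]
          exact LieSubmodule.lie_mem_lie hyK ha
        have m5 : ⁅p, y⁆ ∈ Φ := by
          show ⁅p, y⁆ ∈ frattini F L
          rw [← lie_skew]
          exact (frattini F L).neg_mem ((frattini F L).lie_mem hp)
        rw [hxe, add_lie, add_lie]
        refine Submodule.add_mem _ (Submodule.add_mem _ ?_ ?_) ?_
        · rw [hye, lie_add, lie_add]
          refine Submodule.add_mem _ (Submodule.add_mem _ ?_ ?_) ?_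
          · exact Submodule.mem_sup_left (Submodule.mem_sup_left m1)
          · exact Submodule.mem_sup_left (Submodule.mem_sup_right m2)
          · exact Submodule.mem_sup_right m3
        · exact Submodule.mem_sup_left (Submodule.mem_sup_right m4)
        · exact Submodule.mem_sup_right m5
      refine le_trans hbase ?_
      refine sup_le ?_ ?_
      · exact le_trans le_sup_left le_sup_left
      · exact hstep
  have hfin : LieSubmodule.toSubmodule K ≤ M.toSubmodule := by
    refine le_trans (key m) ?_
    refine sup_le (sup_le inf_le_right ?_) ?_
    · intro z hz
      exact frattini_le_coatom hM z (h hz)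
    · intro z hz
      exact frattini_le_coatom hM z hz
  obtain ⟨x, hxKK, hxM⟩ := hw
  exact hxM (hfin (LieSubmodule.lie_le_left K K hxKK))

lemma lie_mem_frattini_of_isNilpotent {I J : LieIdeal F L}
    (hI : LieRing.IsNilpotent I) (hJ : LieRing.IsNilpotent J)
    {x y : L} (hx : x ∈ I) (hy : y ∈ J) : ⁅x, y⁆ ∈ frattini F L := by
  obtain ⟨a, ha⟩ := mlcs_eq_bot_of_isNilpotent hI
  obtain ⟨b, hb⟩ := mlcs_eq_bot_of_isNilpotent hJ
  have hIa : I.lcs L (a+1) = ⊥ :=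
    le_bot_iff.mp (le_trans (lcs_succ_le_mlcs I a) (le_of_eq ha))
  have hJb : J.lcs L (b+1) = ⊥ :=
    le_bot_iff.mp (le_trans (lcs_succ_le_mlcs J b) (le_of_eq hb))
  have hsup : (I ⊔ J).lcs L (a+b+2) = ⊥ := by
    rw [eq_bot_iff]
    refine le_trans (lcs_sup_le I J _) ?_
    apply Finset.sup_le
    intro p hp
    rw [Finset.mem_range] at hp
    by_cases hpa : a + 1 ≤ p
    · exact le_trans inf_le_left (le_trans (lcs_antitone I hpa) (le_of_eq hIa))
    · have h2 : b + 1 ≤ a + b + 2 - p := by omega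
      exact le_trans inf_le_right (le_trans (lcs_antitone J h2) (le_of_eq hJb))
  have hm : mlcs (I ⊔ J) (a+b+2) ≤ frattini F L := by
    refine le_trans (mlcs_le_lcs _ _) ?_
    rw [hsup]
    exact bot_le
  exact derived_le_frattini (I ⊔ J) (a+b+2) hm
    (LieSubmodule.lie_mem_lie ((le_sup_left : I ≤ I ⊔ J) hx) ((le_sup_right : J ≤ I ⊔ J) hy))

lemma nilrad_sq_le_frattini : ⁅nilrad F L, nilrad F L⁆ ≤ frattini F L := by
  have step1 : ∀ J : LieIdeal F L, LieRing.IsNilpotent J → ∀ y ∈ J,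
      ∀ x ∈ nilrad F L, ⁅x, y⁆ ∈ frattini F L := by
    intro J hJ y hy
    set Q : Submodule F L :=
      { carrier := {z | ⁅z, y⁆ ∈ frattini F L}
        zero_mem' := by simp
        add_mem' := by
          intro a b ha hb
          show ⁅a + b, y⁆ ∈ frattini F L
          rw [add_lie]
          exact (frattini F L).add_mem ha hb
        smul_mem' := by
          intro c a ha
          show ⁅c • a, y⁆ ∈ frattini F L
          rw [smul_lie]
          exact (frattini F L).smul_mem c ha }
    have hle : LieSubmodule.toSubmodule (nilrad F L) ≤ Q := by
      rw [nilrad, LieSubmodule.sSup_toSubmodule]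
      apply sSup_le
      rintro p ⟨I, hI, rfl⟩
      intro x hx
      exact lie_mem_frattini_of_isNilpotent hI hJ hx hy
    intro x hx
    exact hle hx
  rw [LieSubmodule.lie_le_iff]
  intro x hx y hy
  set Q2 : Submodule F L :=
    { carrier := {z | ⁅x, z⁆ ∈ frattini F L}
      zero_mem' := by simp
      add_mem' := by
        intro a b ha hb
        show ⁅x, a + b⁆ ∈ frattini F L
        rw [lie_add]
        exact (frattini F L).add_mem ha hb
      smul_mem' := by
        intro c a ha
        show ⁅x, c • a⁆ ∈ frattini F L
        rw [lie_smul]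
        exact (frattini F L).smul_mem c ha }
  have hle : LieSubmodule.toSubmodule (nilrad F L) ≤ Q2 := by
    rw [nilrad, LieSubmodule.sSup_toSubmodule]
    apply sSup_le
    rintro p ⟨J, hJ, rfl⟩
    intro z hz
    exact step1 J hJ z hz x hx
  exact hle hy

/-- A central-mod-Frattini ideal of a perfect ideal lies in the Frattini ideal. -/
lemma perfect_central_le_frattini {T W : LieIdeal F L} (hT : ⁅T, T⁆ = T) (hWT : W ≤ T)
    (hc : ⁅T, W⁆ ≤ frattini F L) : W ≤ frattini F L := by
  apply le_frattini
  intro M hM x hx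
  by_contra hxM
  have hdec := mem_sup_of_coatom hM ⟨x, hx, hxM⟩
  have hTM : LieSubmodule.toSubmodule T ≤ M.toSubmodule := by
    conv_lhs => rw [← hT]
    rw [LieSubmodule.lieIdeal_oper_eq_linear_span', Submodule.span_le]
    rintro z ⟨c, hcT, d, hdT, rfl⟩
    obtain ⟨w, hwW, m, hmM, he⟩ := Submodule.mem_sup.mp (hdec c)
    obtain ⟨w', hw'W, m', hm'M, he'⟩ := Submodule.mem_sup.mp (hdec d)
    have e1 : ⁅c, d⁆ = ⁅w, d⁆ + (⁅m, w'⁆ + ⁅m, m'⁆) := by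
      rw [← he, ← he', add_lie, lie_add, lie_add]
    rw [e1]
    have hmT : m ∈ T := by
      have hm : m = c - w := by rw [← he]; abel
      rw [hm]
      exact T.sub_mem hcT (hWT hwW)
    have p1 : ⁅w, d⁆ ∈ M := by
      rw [← lie_skew]
      exact neg_mem (frattini_le_coatom hM _ (hc (LieSubmodule.lie_mem_lie hdT hwW)))
    have p2 : ⁅m, w'⁆ ∈ M :=
      frattini_le_coatom hM _ (hc (LieSubmodule.lie_mem_lie hmT hw'W))
    have p3 : ⁅m, m'⁆ ∈ M := M.lie_mem hmM hm'M
    exact M.toSubmodule.add_mem p1 (M.toSubmodule.add_mem p2 p3)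
  exact hxM (hTM (hWT hx))

lemma exists_minModIdeal [FiniteDimensional F L] {X : LieIdeal F L} (h : frattini F L < X) :
    ∃ A : LieIdeal F L, A ≤ X ∧ IsMinModIdeal (frattini F L) A := by
  set s : Set ℕ := {n | ∃ A : LieIdeal F L, frattini F L < A ∧ A ≤ X ∧
    Module.finrank F (LieSubmodule.toSubmodule A) = n} with hs
  have hne : s.Nonempty := ⟨_, X, h, le_rfl, rfl⟩
  obtain ⟨A, hA1, hA2, hA3⟩ := Nat.sInf_mem hne
  refine ⟨A, hA2, hA1, ?_⟩
  intro B hB1 hB2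
  by_cases hBφ : B = frattini F L
  · exact Or.inl hBφ
  · right
    have hB1' : frattini F L < B := lt_of_le_of_ne hB1 (Ne.symm hBφ)
    have hBs : Module.finrank F (LieSubmodule.toSubmodule B) ∈ s :=
      ⟨B, hB1', hB2.trans hA2, rfl⟩
    have hrk : Module.finrank F (LieSubmodule.toSubmodule A) ≤
        Module.finrank F (LieSubmodule.toSubmodule B) := by
      rw [hA3]
      exact Nat.sInf_le hBs
    have hsub : LieSubmodule.toSubmodule B = LieSubmodule.toSubmodule A :=
      Submodule.eq_of_le_of_finrank_le ((LieSubmodule.toSubmodule_le_toSubmodule _ _).mpr hB2) hrk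
    exact (LieSubmodule.toSubmodule_inj _ _).mp hsub

/-- Any ideal which is abelian modulo the Frattini ideal is contained in `Ñ(L)`. -/
lemma abelian_le_Ntilde [FiniteDimensional F L] (K : LieIdeal F L)
    (h : ⁅K, K⁆ ≤ frattini F L) : K ≤ Ntilde F L := by
  suffices H : ∀ n : ℕ, ∀ K : LieIdeal F L, frattini F L ≤ K → ⁅K, K⁆ ≤ frattini F L →
      Module.finrank F (LieSubmodule.toSubmodule K) ≤ n → K ≤ Ntilde F L by
    have h2 : ⁅K ⊔ frattini F L, K ⊔ frattini F L⁆ ≤ frattini F L := by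
      rw [LieSubmodule.sup_lie, LieSubmodule.lie_sup, LieSubmodule.lie_sup]
      refine sup_le (sup_le h ?_) (sup_le ?_ ?_)
      · exact LieSubmodule.lie_le_right _ _
      · exact LieSubmodule.lie_le_left _ _
      · exact LieSubmodule.lie_le_left _ _
    exact le_trans le_sup_left (H _ (K ⊔ frattini F L) le_sup_right h2 le_rfl)
  intro n
  induction n using Nat.strong_induction_on with
  | _ n ih =>
  intro K hφK hKK hrank
  by_cases hKφ : K ≤ frattini F L
  · exact le_trans hKφ le_sup_left
  · have hφK' : frattini F L < K := lt_of_le_of_ne hφK (fun e => hKφ (le_of_eq e.symm))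
    obtain ⟨A, hAK, hAmin⟩ := exists_minModIdeal hφK'
    have hANt : A ≤ Ntilde F L :=
      le_trans (le_sSup (show A ∈ {A : LieIdeal F L | IsMinModIdeal (frattini F L) A} from hAmin))
        le_sup_right
    obtain ⟨M, hM, hwit⟩ := exists_coatom_not_le hAmin.1.not_ge
    have hdec := mem_sup_of_coatom hM hwit
    set K1 : LieIdeal F L :=
      { toSubmodule := LieSubmodule.toSubmodule K ⊓ M.toSubmodule
        lie_mem := by
          intro z k hk
          have hkK : k ∈ K := (Submodule.mem_inf.mp hk).1
          have hkM : k ∈ M := (Submodule.mem_inf.mp hk).2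
          obtain ⟨a, haA, m, hmM, he⟩ := Submodule.mem_sup.mp (hdec z)
          have h1 : ⁅a, k⁆ ∈ frattini F L := hKK (LieSubmodule.lie_mem_lie (hAK haA) hkK)
          have e2 : ⁅z, k⁆ = ⁅a, k⁆ + ⁅m, k⁆ := by rw [← add_lie, he]
          show ⁅z, k⁆ ∈ LieSubmodule.toSubmodule K ⊓ M.toSubmodule
          rw [e2]
          refine Submodule.add_mem _ ?_ ?_
          · exact Submodule.mem_inf.mpr ⟨hφK h1, frattini_le_coatom hM _ h1⟩
          · exact Submodule.mem_inf.mpr ⟨K.lie_mem hkK, M.lie_mem hmM hkM⟩ } with hK1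
    have hφK1 : frattini F L ≤ K1 := by
      intro z hz
      exact Submodule.mem_inf.mpr ⟨hφK hz, frattini_le_coatom hM z hz⟩
    have hK1K : K1 ≤ K := fun z hz => (Submodule.mem_inf.mp hz).1
    have hK1sq : ⁅K1, K1⁆ ≤ frattini F L := le_trans (LieSubmodule.mono_lie hK1K hK1K) hKK
    have hlt : Module.finrank F (LieSubmodule.toSubmodule K1) <
        Module.finrank F (LieSubmodule.toSubmodule K) := by
      apply Submodule.finrank_lt_finrank_of_lt
      refine lt_of_le_of_ne inf_le_left ?_
      intro he
      obtain ⟨x, hxA, hxM⟩ := hwit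
      have hxK1 : x ∈ LieSubmodule.toSubmodule K1 := by
        rw [he]
        exact hAK hxA
      exact hxM (Submodule.mem_inf.mp hxK1).2
    have hK1Nt : K1 ≤ Ntilde F L :=
      ih _ (lt_of_lt_of_le hlt hrank) K1 hφK1 hK1sq le_rfl
    have hKle : K ≤ A ⊔ K1 := by
      intro z hz
      rw [LieSubmodule.mem_sup]
      obtain ⟨a, haA, m, hmM, he⟩ := Submodule.mem_sup.mp (hdec z)
      have hmK : m ∈ K := by
        have hm : m = z - a := by rw [← he]; abel
        rw [hm]
        exact K.sub_mem hz (hAK haA)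
      exact ⟨a, haA, m, Submodule.mem_inf.mpr ⟨hmK, hmM⟩, he⟩
    exact le_trans hKle (sup_le hANt hK1Nt)

end Aux18

/-- `N*(L) ⊆ Ñ(L)`. -/
theorem stmt_18 (F : Type*) [Field F] (L : Type*) [LieRing L] [LieAlgebra F L]
    [FiniteDimensional F L] :
    Nstar F L ≤ Ntilde F L := by
  classical
  have hNN : ⁅nilrad F L, nilrad F L⁆ ≤ frattini F L := nilrad_sq_le_frattini
  have hNle : nilrad F L ≤ Ntilde F L := abelian_le_Ntilde (nilrad F L) hNN
  refine sup_le hNle (sSup_le ?_)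
  rintro A ⟨⟨hNA, hminB⟩, hle⟩
  -- Step (a): `⁅A, N⁆ ≤ φ`.
  have hmod : (nilrad F L ⊔ centralizer (nilrad F L)) ⊓ A =
      nilrad F L ⊔ (centralizer (nilrad F L) ⊓ A) :=
    sup_inf_assoc_of_le _ hNA.le
  have hAeq : A = nilrad F L ⊔ (centralizer (nilrad F L) ⊓ A) :=
    ((inf_eq_right.mpr hle).symm.trans hmod)
  have hCN : ⁅centralizer (nilrad F L) ⊓ A, nilrad F L⁆ ≤ (⊥ : LieIdeal F L) := by
    rw [LieSubmodule.lie_le_iff]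
    intro x hx y hy
    have hx1 : x ∈ centralizer (nilrad F L) := (LieSubmodule.mem_inf _ _ _).mp hx |>.1
    have : ⁅x, y⁆ = 0 := hx1 y hy
    simp [this]
  have hAN : ⁅A, nilrad F L⁆ ≤ frattini F L := by
    conv_lhs => rw [hAeq]
    rw [LieSubmodule.sup_lie]
    exact sup_le hNN (le_trans hCN bot_le)
  -- Case split on `B := ⁅A,A⁆ ⊔ N`.
  rcases hminB (⁅A, A⁆ ⊔ nilrad F L) le_sup_right
      (sup_le (LieSubmodule.lie_le_left A A) hNA.le) with hBN | hBA
  · -- `⁅A,A⁆ ≤ N` : then `A` is nilpotent modulo `φ`.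
    have hAAN : ⁅A, A⁆ ≤ nilrad F L := by
      have h1 : ⁅A, A⁆ ≤ ⁅A, A⁆ ⊔ nilrad F L := le_sup_left
      rw [hBN] at h1
      exact h1
    have h3 : mlcs A 2 ≤ frattini F L := by
      have e2 : mlcs A 2 = ⁅A, ⁅A, (A : LieIdeal F L)⁆⁆ := by
        simp only [mlcs_succ, mlcs_zero]
      rw [e2]
      exact le_trans (LieSubmodule.mono_lie le_rfl hAAN) hAN
    exact abelian_le_Ntilde A (derived_le_frattini A 2 h3)
  · -- `A = ⁅A,A⁆ ⊔ N`.
    -- Choose an ideal `T ≤ A` minimal with `A ≤ (T ⊔ N) ⊔ φ`.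
    set s : Set ℕ := {n | ∃ T : LieIdeal F L,
      (T ≤ A ∧ A ≤ (T ⊔ nilrad F L) ⊔ frattini F L) ∧
      Module.finrank F (LieSubmodule.toSubmodule T) = n} with hs
    have hsne : s.Nonempty := ⟨_, A, ⟨le_rfl, le_trans le_sup_left le_sup_left⟩, rfl⟩
    obtain ⟨T, ⟨hTA, hAT⟩, hTrk⟩ := Nat.sInf_mem hsne
    -- `T` is perfect.
    have hTN : ⁅T, nilrad F L⁆ ≤ frattini F L := le_trans (LieSubmodule.mono_lie hTA le_rfl) hAN
    have hA2 : ⁅A, A⁆ ≤ ⁅T, T⁆ ⊔ frattini F L := by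
      refine le_trans (LieSubmodule.mono_lie hAT hAT) ?_
      rw [LieSubmodule.sup_lie, LieSubmodule.sup_lie]
      refine sup_le (sup_le ?_ ?_) ?_
      · rw [LieSubmodule.lie_sup, LieSubmodule.lie_sup]
        refine sup_le (sup_le le_sup_left ?_) ?_
        · exact le_trans hTN le_sup_right
        · exact le_trans (LieSubmodule.lie_le_right _ _) le_sup_right
      · rw [LieSubmodule.lie_sup, LieSubmodule.lie_sup]
        refine sup_le (sup_le ?_ ?_) ?_
        · rw [LieSubmodule.lie_comm]
          exact le_trans hTN le_sup_right
        · exact le_trans hNN le_sup_right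
        · exact le_trans (LieSubmodule.lie_le_right _ _) le_sup_right
      · exact le_trans (LieSubmodule.lie_le_left _ _) le_sup_right
    have hsq : A ≤ (⁅T, T⁆ ⊔ nilrad F L) ⊔ frattini F L := by
      conv_lhs => rw [← hBA]
      refine sup_le ?_ (le_trans le_sup_right le_sup_left)
      refine le_trans hA2 ?_
      exact sup_le (le_trans le_sup_left le_sup_left) le_sup_right
    have hTmem : Module.finrank F (LieSubmodule.toSubmodule ⁅T, T⁆) ∈ s :=
      ⟨⁅T, T⁆, ⟨le_trans (LieSubmodule.lie_le_left T T) hTA, hsq⟩, rfl⟩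
    have hTperf : ⁅T, T⁆ = T := by
      have hfr : Module.finrank F (LieSubmodule.toSubmodule T) ≤
          Module.finrank F (LieSubmodule.toSubmodule ⁅T, T⁆) := by
        rw [hTrk]
        exact Nat.sInf_le hTmem
      exact (LieSubmodule.toSubmodule_inj _ _).mp
        (Submodule.eq_of_le_of_finrank_le
          ((LieSubmodule.toSubmodule_le_toSubmodule _ _).mpr
            (LieSubmodule.lie_le_left T T)) hfr)
    -- `W := T ⊓ (N ⊔ φ)` is central in `T` mod `φ`, hence `W ≤ φ`.
    have hTW : ⁅T, T ⊓ (nilrad F L ⊔ frattini F L)⁆ ≤ frattini F L := by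
      refine le_trans (LieSubmodule.mono_lie le_rfl inf_le_right) ?_
      rw [LieSubmodule.lie_sup]
      exact sup_le hTN (LieSubmodule.lie_le_right _ _)
    have hW : T ⊓ (nilrad F L ⊔ frattini F L) ≤ frattini F L :=
      perfect_central_le_frattini hTperf inf_le_left hTW
    by_cases hTφ : T ≤ frattini F L
    · -- degenerate case: `A` is abelian mod `φ`.
      have hANφ : A ≤ nilrad F L ⊔ frattini F L := by
        refine le_trans hAT ?_
        exact sup_le (sup_le (le_trans hTφ le_sup_right) le_sup_left) le_sup_right
      have habel : ⁅A, A⁆ ≤ frattini F L := by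
        refine le_trans (LieSubmodule.mono_lie hANφ hANφ) ?_
        rw [LieSubmodule.sup_lie, LieSubmodule.lie_sup, LieSubmodule.lie_sup]
        refine sup_le (sup_le hNN ?_) ?_
        · exact LieSubmodule.lie_le_right _ _
        · exact sup_le (LieSubmodule.lie_le_left _ _) (LieSubmodule.lie_le_left _ _)
      exact abelian_le_Ntilde A habel
    · -- `T ⊔ φ` is a minimal ideal mod `φ`.
      have hmin' : IsMinModIdeal (frattini F L) (T ⊔ frattini F L) := by
        constructor
        · refine lt_of_le_of_ne le_sup_right ?_
          intro he
          exact hTφ (le_trans le_sup_left he.symm.le)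
        · intro B hB1 hB2
          rcases hminB ((B ⊔ nilrad F L) ⊓ A) (le_inf le_sup_right hNA.le) inf_le_right
            with hDN | hDA
          · -- `B = φ`.
            left
            have hBT : B ⊓ T ≤ nilrad F L := by
              have h1 : B ⊓ T ≤ (B ⊔ nilrad F L) ⊓ A :=
                le_inf (le_trans inf_le_left le_sup_left) (le_trans inf_le_right hTA)
              rw [hDN] at h1
              exact h1
            have hBTW : B ⊓ T ≤ frattini F L := by
              refine le_trans ?_ hW
              exact le_inf inf_le_right (le_trans hBT le_sup_left)
            have hmod2 : (frattini F L ⊔ T) ⊓ B = frattini F L ⊔ (T ⊓ B) :=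
              sup_inf_assoc_of_le T hB1
            have hBle : B ≤ frattini F L ⊔ T := by
              rw [sup_comm]
              exact hB2
            have hBeq : B = frattini F L ⊔ (T ⊓ B) := by
              rw [← hmod2]
              exact (inf_eq_right.mpr hBle).symm
            have hBφ : B ≤ frattini F L := by
              rw [hBeq]
              refine sup_le le_rfl ?_
              rw [inf_comm]
              exact hBTW
            exact le_antisymm hBφ hB1
          · -- `B = T ⊔ φ`.
            right
            have hABN : A ≤ B ⊔ nilrad F L := by
              have h1 : (B ⊔ nilrad F L) ⊓ A ≤ B ⊔ nilrad F L := inf_le_left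
              rw [hDA] at h1
              exact h1
            have hBN2 : ⁅B, nilrad F L⁆ ≤ frattini F L := by
              refine le_trans (LieSubmodule.mono_lie hB2 le_rfl) ?_
              rw [LieSubmodule.sup_lie]
              exact sup_le hTN (LieSubmodule.lie_le_left _ _)
            have h4 : ⁅A, A⁆ ≤ B ⊔ frattini F L := by
              refine le_trans (LieSubmodule.mono_lie hABN hABN) ?_
              rw [LieSubmodule.sup_lie, LieSubmodule.lie_sup, LieSubmodule.lie_sup]
              refine sup_le (sup_le ?_ ?_) ?_
              · exact le_trans (LieSubmodule.lie_le_left _ _) le_sup_left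
              · exact le_trans hBN2 le_sup_right
              · refine sup_le ?_ (le_trans hNN le_sup_right)
                rw [LieSubmodule.lie_comm]
                exact le_trans hBN2 le_sup_right
            have h5 : T ≤ B ⊔ frattini F L := by
              rw [← hTperf]
              exact le_trans (LieSubmodule.mono_lie hTA hTA) h4
            rw [sup_eq_left.mpr hB1] at h5
            exact le_antisymm hB2 (sup_le h5 hB1)
      have hT'Nt : T ⊔ frattini F L ≤ Ntilde F L :=
        le_trans (le_sSup (show (T ⊔ frattini F L) ∈
          {A : LieIdeal F L | IsMinModIdeal (frattini F L) A} from hmin')) le_sup_right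
      refine le_trans hAT ?_
      refine sup_le (sup_le ?_ hNle) ?_
      · exact le_trans le_sup_left hT'Nt
      · exact le_sup_left

end Paper
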